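/- Let X be a space, κ an infinite cardinal with wt(X) ≤ κ, and 𝒞 a cover of X witnessing wt(X) ≤ κ (i.e., |𝒞| ≤ 2^κ, each C ∈ 𝒞 has t(C) ≤ κ, and X = cl_{2^κ}(C) for each C ∈ 𝒞). If 𝓑 is an increasing chain of κ⁺-many 𝒞-saturated subsets of X, then closure(⋃𝓑) = ⋃_{B∈𝓑} closure(B). -/

import Mathlib

open Cardinal Set TopologicalSpace

universe u

/-- The tightness `t(X)`: the least infinite cardinal `κ` such that whenever
`x ∈ closure A` there is `B ⊆ A` with `#B ≤ κ` and `x ∈ closure B`. -/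
noncomputable def tightness (X : Type u) [TopologicalSpace X] : Cardinal.{u} :=
  sInf {κ : Cardinal.{u} | ℵ₀ ≤ κ ∧ ∀ (A : Set X) (x : X), x ∈ closure A →
    ∃ B ⊆ A, #B ≤ κ ∧ x ∈ closure B}

/-- The `κ`-closure of a set `A`. -/
noncomputable def clk {X : Type u} [TopologicalSpace X] (κ : Cardinal.{u}) (A : Set X) : Set X :=
  ⋃ (B : Set X) (_ : B ⊆ A ∧ #B ≤ κ), closure B

/-- A cover `𝒞` witnessing that `wt X ≤ κ`. -/
noncomputable def IsWtWitness {X : Type u} [TopologicalSpace X] (κ : Cardinal.{u}) (𝒞 : Set (Set X)) : Prop :=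
  ⋃₀ 𝒞 = Set.univ ∧ #𝒞 ≤ 2 ^ κ ∧ ∀ C ∈ 𝒞, tightness ↥C ≤ κ ∧ clk (2 ^ κ) C = Set.univ

/-- The weak tightness `wt(X)`. -/
noncomputable def wt (X : Type u) [TopologicalSpace X] : Cardinal.{u} :=
  sInf {κ : Cardinal.{u} | ℵ₀ ≤ κ ∧ ∃ 𝒞 : Set (Set X), IsWtWitness κ 𝒞}

/-- The Lindelöf number `L(X)`. -/
noncomputable def LindelofNumber (X : Type u) [TopologicalSpace X] : Cardinal.{u} :=
  sInf {κ : Cardinal.{u} | ℵ₀ ≤ κ ∧ ∀ 𝒰 : Set (Set X), (∀ U ∈ 𝒰, IsOpen U) →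
    ⋃₀ 𝒰 = Set.univ → ∃ 𝒱 ⊆ 𝒰, #𝒱 ≤ κ ∧ ⋃₀ 𝒱 = Set.univ}

/-- The pseudocharacter `ψ(X)`. -/
noncomputable def psi (X : Type u) [TopologicalSpace X] : Cardinal.{u} :=
  sInf {κ : Cardinal.{u} | ℵ₀ ≤ κ ∧ ∀ x : X, ∃ 𝒰 : Set (Set X),
    #𝒰 ≤ κ ∧ (∀ U ∈ 𝒰, IsOpen U ∧ x ∈ U) ∧ ⋂₀ 𝒰 = {x}}

/-- The closed pseudocharacter `ψ_c(X)`. -/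
noncomputable def psic (X : Type u) [TopologicalSpace X] : Cardinal.{u} :=
  sInf {κ : Cardinal.{u} | ℵ₀ ≤ κ ∧ ∀ x : X, ∃ 𝒰 : Set (Set X),
    #𝒰 ≤ κ ∧ (∀ U ∈ 𝒰, IsOpen U ∧ x ∈ U) ∧ (⋂ U ∈ 𝒰, closure U) = {x}}

/-- `A` is `𝒞`-saturated: `A ∩ C` is dense in `A` for every `C ∈ 𝒞`. -/
noncomputable def Saturated {X : Type u} [TopologicalSpace X] (𝒞 : Set (Set X)) (A : Set X) : Prop :=
  ∀ C ∈ 𝒞, A ⊆ closure (A ∩ C)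

/-- The π-character `πχ(x, X)` of a point: least cardinality of a local π-base at `x`. -/
noncomputable def piCharPt {X : Type u} [TopologicalSpace X] (x : X) : Cardinal.{u} :=
  sInf {κ : Cardinal.{u} | ∃ ℬ : Set (Set X), #ℬ ≤ κ ∧
    (∀ B ∈ ℬ, IsOpen B ∧ B.Nonempty) ∧ ∀ U : Set X, IsOpen U → x ∈ U → ∃ B ∈ ℬ, B ⊆ U}

/-- The π-character `πχ(X)`. -/
noncomputable def piChar (X : Type u) [TopologicalSpace X] : Cardinal.{u} :=
  ⨆ x : X, piCharPt x

/-- The character `χ(x, X)` of a point: least cardinality of a local base at `x`. -/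
noncomputable def charPt {X : Type u} [TopologicalSpace X] (x : X) : Cardinal.{u} :=
  sInf {κ : Cardinal.{u} | ∃ ℬ : Set (Set X), #ℬ ≤ κ ∧
    (∀ B ∈ ℬ, IsOpen B ∧ x ∈ B) ∧ ∀ U : Set X, IsOpen U → x ∈ U → ∃ B ∈ ℬ, B ⊆ U}

/-- The character `χ(X)`. -/
noncomputable def character (X : Type u) [TopologicalSpace X] : Cardinal.{u} :=
  ⨆ x : X, charPt x

/-- The density `d(X)`: least cardinality of a dense subset. -/
noncomputable def density (X : Type u) [TopologicalSpace X] : Cardinal.{u} :=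
  sInf {κ : Cardinal.{u} | ∃ D : Set X, Dense D ∧ #D ≤ κ}

/-- A space is homogeneous if its homeomorphism group acts transitively. -/
noncomputable def Homogeneous (X : Type u) [TopologicalSpace X] : Prop :=
  ∀ x y : X, ∃ h : X ≃ₜ X, h x = y

/-- A space is power homogeneous if some (nonempty) power of it is homogeneous. -/
noncomputable def PowerHomogeneous (X : Type u) [TopologicalSpace X] : Prop :=
  ∃ I : Type u, Nonempty I ∧ Homogeneous (I → X)

/-- A `G^c_κ`-set: `G = ⋂𝒰 = ⋂_{U ∈ 𝒰} closure U` for a family `𝒰` of `≤ κ` open sets. -/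
noncomputable def GcSet {X : Type u} [TopologicalSpace X] (κ : Cardinal.{u}) (G : Set X) : Prop :=
  ∃ 𝒰 : Set (Set X), #𝒰 ≤ κ ∧ (∀ U ∈ 𝒰, IsOpen U) ∧
    G = ⋂₀ 𝒰 ∧ G = ⋂ U ∈ 𝒰, closure U

/-- A subset is subseparable if it is contained in the closure of a countable set. -/
noncomputable def Subseparable {X : Type u} [TopologicalSpace X] (A : Set X) : Prop :=
  ∃ c : Set X, c.Countable ∧ A ⊆ closure c

lemma tightness_spec (X : Type u) [TopologicalSpace X] :
    ∀ (A : Set X) (x : X), x ∈ closure A →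
      ∃ B ⊆ A, #B ≤ tightness X ∧ x ∈ closure B := by
  have hne : {κ : Cardinal.{u} | ℵ₀ ≤ κ ∧ ∀ (A : Set X) (x : X), x ∈ closure A →
      ∃ B ⊆ A, #B ≤ κ ∧ x ∈ closure B}.Nonempty := by
    refine ⟨max ℵ₀ #X, le_max_left _ _, fun A x hx => ⟨A, le_rfl, ?_, hx⟩⟩
    exact le_trans (Cardinal.mk_set_le A) (le_max_right _ _)
  exact (csInf_mem hne).2

/-- Lemma 2.7: increasing chains of `κ⁺`-many `𝒞`-saturated sets,
indexed by the ordinals below `(κ⁺).ord`. -/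
theorem stmt2 {X : Type u} [TopologicalSpace X] (κ : Cardinal.{u}) (hκ : ℵ₀ ≤ κ)
    (hwt : wt X ≤ κ) (𝒞 : Set (Set X)) (hC : IsWtWitness κ 𝒞)
    (B : {i : Ordinal.{u} // i < (Order.succ κ).ord} → Set X)
    (hmono : Monotone B) (hsat : ∀ i, Saturated 𝒞 (B i)) :
    closure (⋃ i, B i) = ⋃ i, closure (B i) := by
  apply Set.Subset.antisymm
  · intro x hx
    -- find C ∈ 𝒞 containing x
    obtain ⟨hcov, -, hCprops⟩ := hC
    obtain ⟨C, hC𝒞, hxC⟩ : ∃ C ∈ 𝒞, x ∈ C := by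
      have : x ∈ ⋃₀ 𝒞 := hcov ▸ Set.mem_univ x
      simpa [Set.mem_sUnion] using this
    -- closure of the union equals closure of union of intersections with C
    set S : Set X := ⋃ i, B i ∩ C with hS
    have hSsubC : S ⊆ C := Set.iUnion_subset fun i => Set.inter_subset_right
    have hxS : x ∈ closure S := by
      have h1 : (⋃ i, B i) ⊆ closure S := by
        refine Set.iUnion_subset fun i y hy => ?_
        exact closure_mono (Set.subset_iUnion (fun i => B i ∩ C) i) (hsat i C hC𝒞 hy)
      have := closure_mono h1 hx
      rwa [closure_closure] at this
    -- move to the subspace C and use tightness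
    have hxC' : (⟨x, hxC⟩ : C) ∈ closure ((Subtype.val : C → X) ⁻¹' S) := by
      rw [closure_subtype]
      have : (Subtype.val : C → X) '' ((Subtype.val : C → X) ⁻¹' S) = S := by
        rw [Subtype.image_preimage_coe]
        exact Set.inter_eq_right.mpr hSsubC
      rw [this]; exact hxS
    obtain ⟨B', hB'sub, hB'card, hxB'⟩ :=
      tightness_spec (↥C) ((Subtype.val : C → X) ⁻¹' S) ⟨x, hxC⟩ hxC'
    have hB'card' : #B' ≤ κ := hB'card.trans (hCprops C hC𝒞).1
    -- push down to X
    set T : Set X := (Subtype.val : C → X) '' B' with hT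
    have hTcard : #T ≤ κ := (Cardinal.mk_image_le).trans hB'card'
    have hxT : x ∈ closure T := by
      have := image_closure_subset_closure_image (continuous_subtype_val (p := (· ∈ C)))
        (Set.mem_image_of_mem _ hxB')
      exact this
    have hTS : T ⊆ S := by
      rintro t ⟨y, hy, rfl⟩
      exact hB'sub hy
    -- each element of T lies in some B i; bound the indices
    have hchoice : ∀ t : T, ∃ i, (t : X) ∈ B i := by
      intro t
      obtain ⟨i, hi, -⟩ := Set.mem_iUnion.mp (hTS t.2)
      exact ⟨i, hi⟩
    choose f hf using hchoice
    have hreg : Cardinal.IsRegular (Order.succ κ) := Cardinal.isRegular_succ hκ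
    have hsup : (⨆ t : T, (f t : Ordinal)) < (Order.succ κ).ord := by
      apply Ordinal.iSup_lt_ord
      · rw [hreg.cof_eq]
        exact hTcard.trans_lt (Order.lt_succ κ)
      · exact fun t => (f t).2
    set j : {i : Ordinal.{u} // i < (Order.succ κ).ord} := ⟨_, hsup⟩ with hj
    have hTBj : T ⊆ B j := by
      intro t ht
      have hle : (f ⟨t, ht⟩ : Ordinal) ≤ (j : Ordinal) :=
        le_ciSup Ordinal.bddAbove_of_small (⟨t, ht⟩ : T)
      exact hmono (Subtype.coe_le_coe.mp hle) (hf ⟨t, ht⟩)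
    exact Set.mem_iUnion.mpr ⟨j, closure_mono hTBj hxT⟩
  · exact Set.iUnion_subset fun i => closure_mono (Set.subset_iUnion B i)
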